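/- Let p, q ≥ 1 and n = p + q. Let ω(w,z) = Σ_{j=1}^{n} (w_j z_{n+j} − w_{n+j} z_j) be the standard symplectic form on ℂ^{2n}, and let h(w,z) = Σ_{j=1}^{p} (w_j·conj(z_j) + w_{n+j}·conj(z_{n+j})) − Σ_{j=p+1}^{n} (w_j·conj(z_j) + w_{n+j}·conj(z_{n+j})) be the hermitian form of signature (2p,2q). If v, v' ∈ ℂ^{2n} are vectors such that h(v,v) and h(v',v') are both positive or both negative, then there exists an invertible complex 2n×2n matrix g satisfying ω(gw,gz) = ω(w,z) and h(gw,gz) = h(w,z) for all w,z ∈ ℂ^{2n}, and a nonzero scalar c ∈ ℂ with g·v = c·v'. -/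

import Mathlib

open Quaternion Finset

namespace Stmt8Aux

variable (p q : ℕ)

def idx0 (i : Fin (p + q)) : Fin (2 * (p + q)) := ⟨i.1, by omega⟩
def idx1 (i : Fin (p + q)) : Fin (2 * (p + q)) := ⟨(p + q) + i.1, by omega⟩
def eps (i : Fin (p + q)) : ℝ := if i.1 < p then 1 else -1

lemma eps_sq (i : Fin (p + q)) : eps p q i * eps p q i = 1 := by
  unfold eps; split <;> norm_num

noncomputable def X (v : Fin (2 * (p + q)) → ℂ) (i : Fin (p + q)) : ℍ[ℝ] :=
  ⟨(v (idx0 p q i)).re, (v (idx0 p q i)).im,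
   -(eps p q i) * (v (idx1 p q i)).re, (eps p q i) * (v (idx1 p q i)).im⟩

noncomputable def Xi (y : Fin (p + q) → ℍ[ℝ]) (k : Fin (2 * (p + q))) : ℂ :=
  if hk : k.1 < p + q then ⟨(y ⟨k.1, hk⟩).re, (y ⟨k.1, hk⟩).imI⟩
  else
    ⟨-(eps p q ⟨k.1 - (p + q), by have := k.2; omega⟩) *
        (y ⟨k.1 - (p + q), by have := k.2; omega⟩).imJ,
      (eps p q ⟨k.1 - (p + q), by have := k.2; omega⟩) *
        (y ⟨k.1 - (p + q), by have := k.2; omega⟩).imK⟩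

lemma Xi_X (v : Fin (2 * (p + q)) → ℂ) : Xi p q (X p q v) = v := by
  funext k
  unfold Xi X
  by_cases hk : k.1 < p + q
  · rw [dif_pos hk]
    have h0 : idx0 p q ⟨k.1, hk⟩ = k := by ext; rfl
    apply Complex.ext <;> simp [h0]
  · rw [dif_neg hk]
    have h1 : idx1 p q ⟨k.1 - (p + q), by have := k.2; omega⟩ = k := by
      ext; simp [idx1]; omega
    have := eps_sq p q ⟨k.1 - (p + q), by have := k.2; omega⟩
    apply Complex.ext <;> simp [h1] <;> rw [← mul_assoc, this, one_mul]

lemma X_Xi (y : Fin (p + q) → ℍ[ℝ]) : X p q (Xi p q y) = y := by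
  funext i
  unfold X Xi
  have h0 : (idx0 p q i).1 < p + q := i.2
  have h1 : ¬ (idx1 p q i).1 < p + q := by simp [idx1]
  rw [dif_pos h0, dif_neg h1]
  have e0 : (⟨(idx0 p q i).1, h0⟩ : Fin (p + q)) = i := by ext; rfl
  have e1 : (⟨(idx1 p q i).1 - (p + q), by have := (idx1 p q i).2; omega⟩ : Fin (p + q)) = i := by
    ext; simp [idx1]
  have := eps_sq p q i
  rw [e0, e1]
  ext <;> simp <;> rw [← mul_assoc, this, one_mul]

noncomputable def Hq (w z : Fin (p + q) → ℍ[ℝ]) : ℍ[ℝ] :=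
  ∑ i, ((eps p q i : ℍ[ℝ]) * (star (w i) * z i))

lemma Hq_add_right (w z z' : Fin (p + q) → ℍ[ℝ]) :
    Hq p q w (z + z') = Hq p q w z + Hq p q w z' := by
  unfold Hq
  rw [← Finset.sum_add_distrib]
  refine Finset.sum_congr rfl fun i _ => ?_
  simp [mul_add]

lemma Hq_add_left (w w' z : Fin (p + q) → ℍ[ℝ]) :
    Hq p q (w + w') z = Hq p q w z + Hq p q w' z := by
  unfold Hq
  rw [← Finset.sum_add_distrib]
  refine Finset.sum_congr rfl fun i _ => ?_
  simp [add_mul, mul_add]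

lemma Hq_sub_right (w z z' : Fin (p + q) → ℍ[ℝ]) :
    Hq p q w (z - z') = Hq p q w z - Hq p q w z' := by
  unfold Hq
  rw [← Finset.sum_sub_distrib]
  refine Finset.sum_congr rfl fun i _ => ?_
  simp [mul_sub]

lemma Hq_sub_left (w w' z : Fin (p + q) → ℍ[ℝ]) :
    Hq p q (w - w') z = Hq p q w z - Hq p q w' z := by
  unfold Hq
  rw [← Finset.sum_sub_distrib]
  refine Finset.sum_congr rfl fun i _ => ?_
  simp [sub_mul, mul_sub]

lemma Hq_mul_right (w z : Fin (p + q) → ℍ[ℝ]) (a : ℍ[ℝ]) :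
    Hq p q w (fun i => z i * a) = Hq p q w z * a := by
  unfold Hq
  rw [Finset.sum_mul]
  refine Finset.sum_congr rfl fun i _ => ?_
  rw [mul_assoc, mul_assoc]

lemma Hq_mul_left (w z : Fin (p + q) → ℍ[ℝ]) (a : ℍ[ℝ]) :
    Hq p q (fun i => w i * a) z = star a * Hq p q w z := by
  unfold Hq
  rw [Finset.mul_sum]
  refine Finset.sum_congr rfl fun i _ => ?_
  rw [star_mul]
  rw [← mul_assoc, ← mul_assoc, ← mul_assoc,
    (Quaternion.coe_commute (eps p q i) (star a)).eq]
  noncomm_ring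

lemma star_Hq (w z : Fin (p + q) → ℍ[ℝ]) : star (Hq p q w z) = Hq p q z w := by
  unfold Hq
  rw [star_sum]
  refine Finset.sum_congr rfl fun i _ => ?_
  rw [star_mul, star_mul, star_star, Quaternion.star_coe, mul_assoc,
    (Quaternion.coe_commute (eps p q i) _).eq, mul_assoc]

noncomputable def refl (u : Fin (p + q) → ℍ[ℝ]) (a : ℍ[ℝ]) (z : Fin (p + q) → ℍ[ℝ]) :
    Fin (p + q) → ℍ[ℝ] :=
  fun i => z i - u i * (a⁻¹ * Hq p q u z)

lemma refl_eq (u : Fin (p + q) → ℍ[ℝ]) (a : ℍ[ℝ]) (z : Fin (p + q) → ℍ[ℝ]) :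
    refl p q u a z = z - fun i => u i * (a⁻¹ * Hq p q u z) := rfl


lemma refl_isometry (u : Fin (p + q) → ℍ[ℝ]) (a : ℍ[ℝ]) (ha : a ≠ 0)
    (hsum : a + star a = Hq p q u u) (w z : Fin (p + q) → ℍ[ℝ]) :
    Hq p q (refl p q u a w) (refl p q u a z) = Hq p q w z := by
  have has : star a ≠ 0 := star_ne_zero.mpr ha
  rw [refl_eq, refl_eq, Hq_sub_left, Hq_sub_right, Hq_sub_right,
    Hq_mul_right, Hq_mul_left, Hq_mul_left, Hq_mul_right]
  rw [star_mul, star_inv₀, star_Hq]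
  set k := Hq p q w u with hk
  set l := Hq p q u z with hl
  rw [← hsum]
  have key : (star a)⁻¹ * ((a + star a) * (a⁻¹ * l)) = a⁻¹ * l + (star a)⁻¹ * l := by
    rw [add_mul, mul_add, mul_inv_cancel_left₀ ha, inv_mul_cancel_left₀ has, add_comm]
  rw [mul_assoc k ((star a)⁻¹), mul_assoc k ((star a)⁻¹), key]
  noncomm_ring


lemma Hq_refl (u : Fin (p + q) → ℍ[ℝ]) (a : ℍ[ℝ]) (ha : a ≠ 0)
    (hsum : a + star a = Hq p q u u) (z : Fin (p + q) → ℍ[ℝ]) :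
    Hq p q u (refl p q u a z) = -(star a * (a⁻¹ * Hq p q u z)) := by
  rw [refl_eq, Hq_sub_right, Hq_mul_right, ← hsum, add_mul, mul_inv_cancel_left₀ ha]
  abel

lemma refl_refl (u : Fin (p + q) → ℍ[ℝ]) (a : ℍ[ℝ]) (ha : a ≠ 0)
    (hsum : a + star a = Hq p q u u) (z : Fin (p + q) → ℍ[ℝ]) :
    refl p q u (star a) (refl p q u a z) = z := by
  have has : star a ≠ 0 := star_ne_zero.mpr ha
  funext i
  show refl p q u a z i - u i * ((star a)⁻¹ * Hq p q u (refl p q u a z)) = z i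
  rw [Hq_refl p q u a ha hsum z]
  show z i - u i * (a⁻¹ * Hq p q u z) - _ = z i
  rw [mul_neg, mul_neg, sub_neg_eq_add, inv_mul_cancel_left₀ has]
  abel

lemma refl_right_mul (u : Fin (p + q) → ℍ[ℝ]) (a : ℍ[ℝ]) (z : Fin (p + q) → ℍ[ℝ])
    (b : ℍ[ℝ]) :
    refl p q u a (fun i => z i * b) = fun i => refl p q u a z i * b := by
  funext i
  show z i * b - u i * (a⁻¹ * Hq p q u fun i => z i * b) =
    (z i - u i * (a⁻¹ * Hq p q u z)) * b
  rw [Hq_mul_right, sub_mul, ← mul_assoc, mul_assoc (u i), mul_assoc (u i), mul_assoc (a⁻¹)]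

lemma refl_add (u : Fin (p + q) → ℍ[ℝ]) (a : ℍ[ℝ]) (z z' : Fin (p + q) → ℍ[ℝ]) :
    refl p q u a (z + z') = refl p q u a z + refl p q u a z' := by
  funext i
  show (z + z') i - u i * (a⁻¹ * Hq p q u (z + z')) = _
  rw [Hq_add_right, mul_add, mul_add]
  show z i + z' i - _ = (z i - _) + (z' i - _)
  abel

lemma witt (x y : Fin (p + q) → ℍ[ℝ]) (hxy : Hq p q x x = Hq p q y y)
    (hne : Hq p q x x ≠ 0) :
    ∃ T Tinv : (Fin (p + q) → ℍ[ℝ]) → (Fin (p + q) → ℍ[ℝ]),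
      (∀ w z, Hq p q (T w) (T z) = Hq p q w z) ∧
      (∀ z, Tinv (T z) = z) ∧ (∀ z, T (Tinv z) = z) ∧
      (∀ z b, T (fun i => z i * b) = fun i => T z i * b) ∧
      (∀ z z', T (z + z') = T z + T z') ∧
      (∀ z b, Tinv (fun i => z i * b) = fun i => Tinv z i * b) ∧
      (∀ z z', Tinv (z + z') = Tinv z + Tinv z') ∧
      (T x = y ∨ T x = -y) := by
  by_cases hA : Hq p q (x - y) x ≠ 0
  · set u := x - y with hu
    set a := Hq p q u x with haa
    have hsum : a + star a = Hq p q u u := by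
      rw [haa, star_Hq]
      have h1 : Hq p q u u = Hq p q u x - Hq p q u y := by rw [hu, Hq_sub_right]
      have h2 : Hq p q x u = Hq p q x x - Hq p q x y := by rw [hu, Hq_sub_right]
      have h3 : Hq p q u y = Hq p q x y - Hq p q y y := by rw [hu, Hq_sub_left]
      rw [h1, h2, h3, hxy]
      abel
    refine ⟨refl p q u a, refl p q u (star a), refl_isometry p q u a hA hsum,
      refl_refl p q u a hA hsum, ?_, refl_right_mul p q u a, refl_add p q u a,
      refl_right_mul p q u (star a), refl_add p q u (star a), Or.inl ?_⟩
    · intro z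
      have hsum' : star a + star (star a) = Hq p q u u := by
        rw [star_star, add_comm]; exact hsum
      have := refl_refl p q u (star a) (star_ne_zero.mpr hA) hsum' z
      rwa [star_star] at this
    · funext i
      show x i - u i * (a⁻¹ * Hq p q u x) = y i
      rw [← haa, inv_mul_cancel₀ hA, mul_one]
      show x i - (x - y) i = y i
      simp
  · push_neg at hA
    have hyx : Hq p q y x = Hq p q x x := by
      have := hA
      rw [Hq_sub_left] at this
      linear_combination (norm := abel) -this
    set u := x + y with hu
    set a := Hq p q u x with haa
    have ha2 : a = Hq p q x x + Hq p q x x := by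
      rw [haa, hu, Hq_add_left, hyx]
    have ha : a ≠ 0 := by
      rw [ha2]
      intro hz
      apply hne
      have h2 : (2 : ℝ) • Hq p q x x = 0 := by rw [two_smul]; exact hz
      simpa using (smul_eq_zero.mp h2).resolve_left (by norm_num)
    have hsum : a + star a = Hq p q u u := by
      rw [haa, star_Hq]
      have h1 : Hq p q u u = Hq p q u x + Hq p q u y := by rw [hu, Hq_add_right]
      have h2 : Hq p q x u = Hq p q x x + Hq p q x y := by rw [hu, Hq_add_right]
      have h3 : Hq p q u y = Hq p q x y + Hq p q y y := by rw [hu, Hq_add_left]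
      rw [h1, h2, h3, hxy]
      abel
    refine ⟨refl p q u a, refl p q u (star a), refl_isometry p q u a ha hsum,
      refl_refl p q u a ha hsum, ?_, refl_right_mul p q u a, refl_add p q u a,
      refl_right_mul p q u (star a), refl_add p q u (star a), Or.inr ?_⟩
    · intro z
      have hsum' : star a + star (star a) = Hq p q u u := by
        rw [star_star, add_comm]; exact hsum
      have := refl_refl p q u (star a) (star_ne_zero.mpr ha) hsum' z
      rwa [star_star] at this
    · funext i
      show x i - u i * (a⁻¹ * Hq p q u x) = (-y) i
      rw [← haa, inv_mul_cancel₀ ha, mul_one]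
      show x i - (x + y) i = (-y) i
      simp


noncomputable def hC (w z : Fin (2 * (p + q)) → ℂ) : ℂ :=
  ∑ i : Fin (p + q), ((eps p q i : ℂ)) *
    ((starRingEnd ℂ) (w (idx0 p q i)) * z (idx0 p q i) +
      (starRingEnd ℂ) (w (idx1 p q i)) * z (idx1 p q i))

noncomputable def omC (w z : Fin (2 * (p + q)) → ℂ) : ℂ :=
  ∑ i : Fin (p + q),
    (w (idx0 p q i) * z (idx1 p q i) - w (idx1 p q i) * z (idx0 p q i))

def Pq (A B : ℂ) : ℍ[ℝ] := ⟨A.re, A.im, B.re, B.im⟩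

lemma Pq_add (A A' B B' : ℂ) : Pq (A + A') (B + B') = Pq A B + Pq A' B' := by
  unfold Pq; ext <;> simp <;> rfl

lemma Pq_sum (f g : Fin (p + q) → ℂ) :
    ∑ i, Pq (f i) (g i) = Pq (∑ i, f i) (∑ i, g i) := by
  classical
  induction (Finset.univ : Finset (Fin (p + q))) using Finset.cons_induction with
  | empty => simp [Pq]; rfl
  | cons a s ha ih => rw [Finset.sum_cons, Finset.sum_cons, Finset.sum_cons, ih, Pq_add]

lemma Pq_inj {A A' B B' : ℂ} (hP : Pq A B = Pq A' B') : A = A' ∧ B = B' := by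
  unfold Pq at hP
  constructor <;> apply Complex.ext
  · exact congrArg QuaternionAlgebra.re hP
  · exact congrArg QuaternionAlgebra.imI hP
  · exact congrArg QuaternionAlgebra.imJ hP
  · exact congrArg QuaternionAlgebra.imK hP


lemma key_term (w z : Fin (2 * (p + q)) → ℂ) (i : Fin (p + q)) :
    ((eps p q i : ℝ) : ℍ[ℝ]) * (star (X p q w i) * X p q z i) =
      Pq ((eps p q i : ℂ) *
            ((starRingEnd ℂ) (w (idx0 p q i)) * z (idx0 p q i) +
              (starRingEnd ℂ) (w (idx1 p q i)) * z (idx1 p q i)))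
        (-(starRingEnd ℂ)
            (w (idx0 p q i) * z (idx1 p q i) - w (idx1 p q i) * z (idx0 p q i))) := by
  apply Quaternion.ext <;>
    simp only [Quaternion.re_mul, Quaternion.imI_mul, Quaternion.imJ_mul, Quaternion.imK_mul, Quaternion.re_star, Quaternion.imI_star, Quaternion.imJ_star,
      Quaternion.imK_star, Quaternion.re_coe, Quaternion.imI_coe, Quaternion.imJ_coe,
      Quaternion.imK_coe] <;>
    unfold X Pq eps <;>
    by_cases hip : i.1 < p <;>
    simp [hip, Complex.mul_re, Complex.mul_im, Complex.add_re, Complex.add_im,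
      Complex.sub_re, Complex.sub_im, Complex.neg_re, Complex.neg_im] <;>
    ring

lemma key (w z : Fin (2 * (p + q)) → ℂ) :
    Hq p q (X p q w) (X p q z) =
      Pq (hC p q w z) (-(starRingEnd ℂ) (omC p q w z)) := by
  unfold Hq hC omC
  rw [map_sum, ← Finset.sum_neg_distrib, ← Pq_sum]
  exact Finset.sum_congr rfl fun i _ => key_term p q w z i


def cq (c : ℂ) : ℍ[ℝ] := ⟨c.re, c.im, 0, 0⟩

lemma X_add (w w' : Fin (2 * (p + q)) → ℂ) : X p q (w + w') = X p q w + X p q w' := by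
  funext i
  ext <;> simp only [Pi.add_apply, Quaternion.re_add, Quaternion.imI_add, Quaternion.imJ_add, Quaternion.imK_add] <;> unfold X <;> simp <;> ring

lemma X_smul (c : ℂ) (v : Fin (2 * (p + q)) → ℂ) :
    X p q (c • v) = fun i => X p q v i * cq c := by
  funext i
  ext <;> simp only [Quaternion.re_mul, Quaternion.imI_mul, Quaternion.imJ_mul, Quaternion.imK_mul] <;> simp [X, cq, Complex.mul_re, Complex.mul_im] <;> ring

lemma Xi_add (y y' : Fin (p + q) → ℍ[ℝ]) : Xi p q (y + y') = Xi p q y + Xi p q y' := by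
  funext k
  unfold Xi
  by_cases hk : k.1 < p + q
  · rw [Pi.add_apply]
    rw [dif_pos hk, dif_pos hk, dif_pos hk]
    apply Complex.ext <;> simp
  · rw [Pi.add_apply]
    rw [dif_neg hk, dif_neg hk, dif_neg hk]
    apply Complex.ext <;> simp <;> ring

lemma Xi_neg (y : Fin (p + q) → ℍ[ℝ]) : Xi p q (-y) = -Xi p q y := by
  funext k
  unfold Xi
  by_cases hk : k.1 < p + q
  · rw [Pi.neg_apply, dif_pos hk, dif_pos hk]
    apply Complex.ext <;> simp
  · rw [Pi.neg_apply, dif_neg hk, dif_neg hk]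
    apply Complex.ext <;> simp

lemma Xi_smul (c : ℂ) (y : Fin (p + q) → ℍ[ℝ]) :
    Xi p q (fun i => y i * cq c) = c • Xi p q y := by
  funext k
  unfold Xi
  by_cases hk : k.1 < p + q
  · rw [Pi.smul_apply, dif_pos hk, dif_pos hk]
    apply Complex.ext <;> simp [Complex.mul_re, Complex.mul_im, Quaternion.re_mul, Quaternion.imI_mul, Quaternion.imJ_mul, Quaternion.imK_mul] <;> simp [cq] <;> ring
  · rw [Pi.smul_apply, dif_neg hk, dif_neg hk]
    apply Complex.ext <;> simp [Complex.mul_re, Complex.mul_im, Quaternion.re_mul, Quaternion.imI_mul, Quaternion.imJ_mul, Quaternion.imK_mul] <;> simp [cq] <;> ring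

lemma sum_split (f : Fin (2 * (p + q)) → ℂ) :
    ∑ j, f j = ∑ i : Fin (p + q), (f (idx0 p q i) + f (idx1 p q i)) := by
  have e : (p + q) + (p + q) = 2 * (p + q) := by ring
  have h1 : ∑ j, f j = ∑ j : Fin ((p + q) + (p + q)), f (Fin.cast e j) :=
    (Fintype.sum_equiv (finCongr e) _ _ (fun j => rfl)).symm
  rw [h1, Fin.sum_univ_add, ← Finset.sum_add_distrib]
  refine Finset.sum_congr rfl fun i _ => ?_
  have a0 : Fin.cast e (Fin.castAdd (p + q) i) = idx0 p q i := by
    ext; simp [idx0]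
  have a1 : Fin.cast e (Fin.natAdd (p + q) i) = idx1 p q i := by
    ext; simp [idx1]; omega
  rw [a0, a1]

lemma omC_self (w : Fin (2 * (p + q)) → ℂ) : omC p q w w = 0 := by
  unfold omC
  refine Finset.sum_eq_zero fun i _ => ?_
  ring

lemma hC_eq_h (w z : Fin (2 * (p + q)) → ℂ) :
    (∑ j : Fin (2 * (p + q)),
      (if (j : ℕ) < p ∨ ((p + q) ≤ (j : ℕ) ∧ (j : ℕ) < (p + q) + p)
        then w j * (starRingEnd ℂ) (z j) else -(w j * (starRingEnd ℂ) (z j)))) =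
      hC p q z w := by
  rw [sum_split]
  unfold hC
  refine Finset.sum_congr rfl fun i _ => ?_
  have h0v : ((idx0 p q i : Fin (2 * (p + q))) : ℕ) = i.1 := rfl
  have h1v : ((idx1 p q i : Fin (2 * (p + q))) : ℕ) = (p + q) + i.1 := rfl
  have hi := i.2
  by_cases hip : i.1 < p
  · rw [if_pos (by rw [h0v]; omega), if_pos (by rw [h1v]; omega)]
    unfold eps
    rw [if_pos hip]
    push_cast
    ring
  · rw [if_neg (by rw [h0v]; omega), if_neg (by rw [h1v]; omega)]
    unfold eps
    rw [if_neg hip]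
    push_cast
    ring

end Stmt8Aux

open ComplexOrder

open Stmt8Aux

/-- `Sp(p,q) ≅ U(2p,2q) ∩ Sp(n,ℂ)` (with `n = p + q`) acts transitively on the
positive lines and on the negative lines in `ℂ^{2n}`, where positivity is with respect
to the hermitian form of signature `(2p,2q)` given by
`h w z = ∑_{j<p} (w_j z̄_j + w_{n+j} z̄_{n+j}) − ∑_{p≤j<n} (w_j z̄_j + w_{n+j} z̄_{n+j})`,
and the group preserves in addition the standard symplectic form. -/
theorem stmt8 (p q : ℕ) (hp : 1 ≤ p) (hq : 1 ≤ q)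
    (ω : (Fin (2 * (p + q)) → ℂ) → (Fin (2 * (p + q)) → ℂ) → ℂ)
    (hω : ∀ w z, ω w z = ∑ j : Fin (p + q),
      (w (⟨j.1, by have := j.2; omega⟩ : Fin (2 * (p + q))) *
          z (⟨(p + q) + j.1, by have := j.2; omega⟩ : Fin (2 * (p + q))) -
        w (⟨(p + q) + j.1, by have := j.2; omega⟩ : Fin (2 * (p + q))) *
          z (⟨j.1, by have := j.2; omega⟩ : Fin (2 * (p + q)))))
    (h : (Fin (2 * (p + q)) → ℂ) → (Fin (2 * (p + q)) → ℂ) → ℂ)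
    (hdef : ∀ w z, h w z = ∑ j : Fin (2 * (p + q)),
      (if (j : ℕ) < p ∨ ((p + q) ≤ (j : ℕ) ∧ (j : ℕ) < (p + q) + p)
        then w j * (starRingEnd ℂ) (z j) else -(w j * (starRingEnd ℂ) (z j))))
    (v v' : Fin (2 * (p + q)) → ℂ)
    (hsign : (0 < h v v ∧ 0 < h v' v') ∨ (h v v < 0 ∧ h v' v' < 0)) :
    ∃ g : Matrix (Fin (2 * (p + q))) (Fin (2 * (p + q))) ℂ, IsUnit g ∧
      (∀ w z, ω (g.mulVec w) (g.mulVec z) = ω w z) ∧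
      (∀ w z, h (g.mulVec w) (g.mulVec z) = h w z) ∧
      ∃ c : ℂ, c ≠ 0 ∧ g.mulVec v = c • v' := by
  classical
  -- real data
  have hvv : h v v = hC p q v v := by rw [hdef]; exact hC_eq_h p q v v
  have hvv' : h v' v' = hC p q v' v' := by rw [hdef]; exact hC_eq_h p q v' v'
  set α := (h v v).re with hα
  set β := (h v' v').re with hβ
  have him : (h v v).im = 0 ∧ (h v' v').im = 0 := by
    rcases hsign with ⟨h1, h2⟩ | ⟨h1, h2⟩
    · exact ⟨by rw [← (Complex.lt_def.mp h1).2]; simp,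
        by rw [← (Complex.lt_def.mp h2).2]; simp⟩
    · exact ⟨by rw [(Complex.lt_def.mp h1).2]; simp,
        by rw [(Complex.lt_def.mp h2).2]; simp⟩
  have hαβpos : 0 < α / β ∧ β ≠ 0 ∧ α ≠ 0 := by
    rcases hsign with ⟨h1, h2⟩ | ⟨h1, h2⟩
    · have h1' := (Complex.lt_def.mp h1).1
      have h2' := (Complex.lt_def.mp h2).1
      simp only [Complex.zero_re] at h1' h2'
      exact ⟨div_pos h1' h2', ne_of_gt h2', ne_of_gt h1'⟩
    · have h1' := (Complex.lt_def.mp h1).1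
      have h2' := (Complex.lt_def.mp h2).1
      simp only [Complex.zero_re] at h1' h2'
      exact ⟨div_pos_iff.mpr (Or.inr ⟨h1', h2'⟩), ne_of_lt h2', ne_of_lt h1'⟩
  obtain ⟨hpos, hβ0, hα0⟩ := hαβpos
  set t := Real.sqrt (α / β) with htdef
  have ht0 : 0 < t := Real.sqrt_pos.mpr hpos
  have ht2 : t * t = α / β := Real.mul_self_sqrt (le_of_lt hpos)
  set v'' : Fin (2 * (p + q)) → ℂ := (t : ℂ) • v' with hv''
  -- norm computations
  have hXvv : Hq p q (X p q v) (X p q v) = Pq (h v v) 0 := by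
    rw [key, omC_self, map_zero, neg_zero, hvv]
  have hscale : hC p q v'' v'' = ((t * t : ℝ) : ℂ) * hC p q v' v' := by
    unfold hC
    rw [Finset.mul_sum]
    refine Finset.sum_congr rfl fun i _ => ?_
    simp only [hv'', Pi.smul_apply, smul_eq_mul, map_mul, Complex.conj_ofReal]
    push_cast
    ring
  have hnormeq : h v v = hC p q v'' v'' := by
    rw [hscale, ← hvv']
    apply Complex.ext
    · simp only [Complex.mul_re, Complex.ofReal_re, Complex.ofReal_im, him.2,
        mul_zero, zero_mul, sub_zero, ht2]
      rw [← hβ]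
      field_simp
      rfl
    · simp only [Complex.mul_im, Complex.ofReal_re, Complex.ofReal_im, him.1, him.2,
        mul_zero, zero_mul, add_zero]
  have hXv'' : Hq p q (X p q v'') (X p q v'') = Pq (h v v) 0 := by
    rw [key, omC_self, map_zero, neg_zero, hnormeq]
  have hne : Hq p q (X p q v) (X p q v) ≠ 0 := by
    rw [hXvv]
    intro hz
    exact hα0 (congrArg QuaternionAlgebra.re hz)
  obtain ⟨T, Tinv, hiso, hTi1, hTi2, hTmul, hTadd, hTimul, hTiadd, hTx⟩ :=
    witt p q (X p q v) (X p q v'') (by rw [hXvv, hXv'']) hne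
  -- linear maps
  set G : (Fin (2 * (p + q)) → ℂ) →ₗ[ℂ] (Fin (2 * (p + q)) → ℂ) :=
    { toFun := fun w => Xi p q (T (X p q w))
      map_add' := fun a b => by
        show Xi p q (T (X p q (a + b))) = Xi p q (T (X p q a)) + Xi p q (T (X p q b))
        rw [X_add, hTadd, Xi_add]
      map_smul' := fun c a => by
        show Xi p q (T (X p q (c • a))) = c • Xi p q (T (X p q a))
        rw [X_smul, hTmul, Xi_smul] } with hG
  set G' : (Fin (2 * (p + q)) → ℂ) →ₗ[ℂ] (Fin (2 * (p + q)) → ℂ) :=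
    { toFun := fun w => Xi p q (Tinv (X p q w))
      map_add' := fun a b => by
        show Xi p q (Tinv (X p q (a + b))) = Xi p q (Tinv (X p q a)) + Xi p q (Tinv (X p q b))
        rw [X_add, hTiadd, Xi_add]
      map_smul' := fun c a => by
        show Xi p q (Tinv (X p q (c • a))) = c • Xi p q (Tinv (X p q a))
        rw [X_smul, hTimul, Xi_smul] } with hG'
  have hGG' : G ∘ₗ G' = LinearMap.id := by
    apply LinearMap.ext
    intro w
    show Xi p q (T (X p q (Xi p q (Tinv (X p q w))))) = w
    rw [X_Xi, hTi2, Xi_X]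
  have hG'G : G' ∘ₗ G = LinearMap.id := by
    apply LinearMap.ext
    intro w
    show Xi p q (Tinv (X p q (Xi p q (T (X p q w))))) = w
    rw [X_Xi, hTi1, Xi_X]
  set gm := LinearMap.toMatrix' G with hgm
  set gm' := LinearMap.toMatrix' G' with hgm'
  have hmul1 : gm * gm' = 1 := by
    rw [hgm, hgm', ← LinearMap.toMatrix'_comp, hGG', LinearMap.toMatrix'_id]
  have hmul2 : gm' * gm = 1 := by
    rw [hgm, hgm', ← LinearMap.toMatrix'_comp, hG'G, LinearMap.toMatrix'_id]
  have hmv : ∀ w, gm.mulVec w = G w := fun w => by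
    rw [hgm, ← Matrix.toLin'_apply, Matrix.toLin'_toMatrix']
  have hXG : ∀ w, X p q (G w) = T (X p q w) := fun w => by
    show X p q (Xi p q (T (X p q w))) = T (X p q w)
    rw [X_Xi]
  have hforms : ∀ w z, hC p q (G w) (G z) = hC p q w z ∧
      omC p q (G w) (G z) = omC p q w z := by
    intro w z
    have hkey : Pq (hC p q (G w) (G z)) (-(starRingEnd ℂ) (omC p q (G w) (G z))) =
        Pq (hC p q w z) (-(starRingEnd ℂ) (omC p q w z)) := by
      rw [← key, ← key, hXG, hXG, hiso]
    obtain ⟨h1, h2⟩ := Pq_inj hkey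
    refine ⟨h1, ?_⟩
    have h3 := neg_injective h2
    exact (starRingEnd ℂ).injective h3
  refine ⟨gm, ⟨⟨gm, gm', hmul1, hmul2⟩, rfl⟩, ?_, ?_, ?_⟩
  · intro w z
    rw [hmv w, hmv z, hω, hω]
    show omC p q (G w) (G z) = omC p q w z
    exact (hforms w z).2
  · intro w z
    rw [hmv w, hmv z, hdef, hdef, hC_eq_h, hC_eq_h]
    exact (hforms z w).1
  · rcases hTx with hTx | hTx
    · refine ⟨(t : ℂ), by exact_mod_cast ne_of_gt ht0, ?_⟩
      rw [hmv v]
      show Xi p q (T (X p q v)) = (t : ℂ) • v'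
      rw [hTx, Xi_X]
    · refine ⟨-(t : ℂ), by simpa using ne_of_gt ht0, ?_⟩
      rw [hmv v]
      show Xi p q (T (X p q v)) = (-(t : ℂ)) • v'
      rw [hTx, Xi_neg, Xi_X, hv'', neg_smul]
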